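/- Let G be a finite simple connected graph with a vertex u of degree 4 whose neighbours a, b, c, d all have degree at least 2 in G. If in G minus the four edges ua, ub, uc, ud the components containing a and b coincide and do not contain c or d, then the pair of vertices {ua, ub} is a 2-cut of the line graph L(G): deleting both disconnects L(G) (assuming L(G) has at least 4 vertices). Hence L(G) is not 3-connected. -/

import Mathlib

open SimpleGraph

/-- A graph is 3-connected: at least 4 vertices, and deleting any set of at most 2
vertices leaves a connected graph. -/
def ThreeConnected {W : Type*} (H : SimpleGraph W) : Prop :=
  4 ≤ Nat.card W ∧ ∀ s : Set W, s.ncard ≤ 2 → (H.induce sᶜ).Connected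

/-- Let `u` be a vertex of degree 4 in a finite connected graph `G`, with neighbours
`a, b, c, d`, all of degree at least 2. If after deleting the four edges at `u` the
vertices `a` and `b` lie in the same component, which contains neither `c` nor `d`,
then `{ua, ub}` is a 2-cut of the line graph; hence the line graph is not
3-connected. -/
theorem stmt_12 {V : Type*} [Fintype V] (G : SimpleGraph V) (hG : G.Connected)
    (u a b c d : V)
    (hnbr : G.neighborSet u = {a, b, c, d})
    (hab : a ≠ b) (hac : a ≠ c) (had : a ≠ d) (hbc : b ≠ c) (hbd : b ≠ d) (hcd : c ≠ d)
    (hda : 2 ≤ (G.neighborSet a).ncard) (hdb : 2 ≤ (G.neighborSet b).ncard)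
    (hdc : 2 ≤ (G.neighborSet c).ncard) (hdd : 2 ≤ (G.neighborSet d).ncard)
    (hreach : (G.deleteEdges {s(u, a), s(u, b), s(u, c), s(u, d)}).Reachable a b)
    (hsep : ∀ w ∈ ({c, d} : Set V),
      ¬ (G.deleteEdges {s(u, a), s(u, b), s(u, c), s(u, d)}).Reachable a w)
    (hcard : 4 ≤ Nat.card G.edgeSet) :
    ¬ (G.lineGraph.induce
        {f : G.edgeSet | (f : Sym2 V) ≠ s(u, a) ∧ (f : Sym2 V) ≠ s(u, b)}).Connected ∧
      ¬ ThreeConnected G.lineGraph := by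
  classical
  set S : Set (Sym2 V) := {s(u, a), s(u, b), s(u, c), s(u, d)} with hS
  set G' := G.deleteEdges S with hG'
  set A : Set V := {x | G'.Reachable a x} with hA
  -- basic adjacencies
  have hadj : ∀ x ∈ ({a, b, c, d} : Set V), G.Adj u x := by
    intro x hx
    have : x ∈ G.neighborSet u := by rw [hnbr]; exact hx
    exact this
  have hua : G.Adj u a := hadj a (by simp)
  have hub : G.Adj u b := hadj b (by simp)
  have huc : G.Adj u c := hadj c (by simp)
  have hud : G.Adj u d := hadj d (by simp)
  have hune : u ≠ a := hua.ne
  -- u is isolated in G'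
  have hiso : ∀ y, ¬ G'.Adj u y := by
    intro y hy
    rw [hG', deleteEdges_adj] at hy
    obtain ⟨hy1, hy2⟩ := hy
    have : y ∈ G.neighborSet u := hy1
    rw [hnbr] at this
    apply hy2
    rcases this with rfl | rfl | rfl | rfl
    · exact Or.inl rfl
    · exact Or.inr (Or.inl rfl)
    · exact Or.inr (Or.inr (Or.inl rfl))
    · exact Or.inr (Or.inr (Or.inr rfl))
  have huA : u ∉ A := by
    intro h
    obtain ⟨w⟩ := h.symm
    cases w with
    | nil => exact hune rfl
    | cons h' _ => exact hiso _ h'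
  have hcA : c ∉ A := hsep c (Or.inl rfl)
  have hdA : d ∉ A := hsep d (Or.inr rfl)
  have haA : a ∈ A := Reachable.refl a
  -- every element of S contains u
  have hmemS : ∀ e ∈ S, u ∈ e := by
    intro e he
    rcases he with rfl | rfl | rfl | rfl <;> simp
  -- the invariant predicate on edges
  set P : G.edgeSet → Prop := fun f => ∀ x ∈ (f : Sym2 V), x ∈ A with hP
  set T : Set G.edgeSet :=
    {f : G.edgeSet | (f : Sym2 V) ≠ s(u, a) ∧ (f : Sym2 V) ≠ s(u, b)} with hT
  -- step: adjacency in the induced line graph preserves P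
  have step : ∀ x y : T, (G.lineGraph.induce T).Adj x y → P x.1 → P y.1 := by
    rintro ⟨⟨e₁, he₁⟩, hx1, hx2⟩ ⟨⟨e₂, he₂⟩, hy1, hy2⟩ hadj' hPx
    simp only [comap_adj, Function.Embedding.coe_subtype] at hadj'
    rw [lineGraph_adj_iff_exists] at hadj'
    obtain ⟨-, v, hv1, hv2⟩ := hadj'
    have hvA : v ∈ A := hPx v hv1
    by_cases heS : e₂ ∈ S
    · -- e₂ is s(u,c) or s(u,d); its vertices are not in A, contradiction
      exfalso
      rcases heS with h | h | h | h
      · exact hy1 h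
      · exact hy2 h
      · have hv2' : v ∈ (s(u, c) : Sym2 V) := by rw [← h]; exact hv2
        rcases Sym2.mem_iff.mp hv2' with rfl | rfl
        · exact huA hvA
        · exact hcA hvA
      · have h' : e₂ = s(u, d) := h
        have hv2' : v ∈ (s(u, d) : Sym2 V) := by rw [← h']; exact hv2
        rcases Sym2.mem_iff.mp hv2' with rfl | rfl
        · exact huA hvA
        · exact hdA hvA
    · -- e₂ is an edge of G'
      induction e₂ using Sym2.ind with
      | _ p q =>
        rw [Sym2.mem_iff] at hv2
        have hpq : G'.Adj p q := by
          rw [hG', deleteEdges_adj]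
          exact ⟨he₂, heS⟩
        have hpA : p ∈ A ∧ q ∈ A := by
          rcases hv2 with rfl | rfl
          · exact ⟨hvA, hvA.trans hpq.reachable⟩
          · exact ⟨hvA.trans hpq.symm.reachable, hvA⟩
        intro x hx
        rcases Sym2.mem_iff.mp hx with rfl | rfl
        · exact hpA.1
        · exact hpA.2
  -- hence reachability in the induced graph preserves P
  have winv : ∀ x y : T, (G.lineGraph.induce T).Walk x y → P x.1 → P y.1 := by
    intro x y w
    induction w with
    | nil => exact id
    | cons h p ih => exact fun hx => ih (step _ _ h hx)
  -- construct the witness edges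
  obtain ⟨a', ha'1, ha'2⟩ : ∃ a', a' ∈ G.neighborSet a ∧ a' ≠ u := by
    by_contra h
    push_neg at h
    have hsub : G.neighborSet a ⊆ {u} := fun x hx => h x hx
    have := Set.ncard_le_ncard hsub (Set.finite_singleton u)
    simp only [Set.ncard_singleton] at this
    omega
  have haa' : G.Adj a a' := ha'1
  have he1mem : s(a, a') ∈ G.edgeSet := haa'
  have he1S : s(a, a') ∉ S := by
    intro h
    have := hmemS _ h
    rw [Sym2.mem_iff] at this
    rcases this with rfl | rfl
    · exact hune rfl
    · exact ha'2 rfl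
  have he2mem : s(u, c) ∈ G.edgeSet := huc
  set E1 : G.edgeSet := ⟨s(a, a'), he1mem⟩ with hE1
  set E2 : G.edgeSet := ⟨s(u, c), he2mem⟩ with hE2
  have hE1T : E1 ∈ T := by
    constructor
    · intro h
      have h' : s(a, a') = s(u, a) := h
      exact he1S (by rw [hS, h']; simp)
    · intro h
      have h' : s(a, a') = s(u, b) := h
      exact he1S (by rw [hS, h']; simp)
  have hE2T : E2 ∈ T := by
    constructor
    · intro h
      have h' : s(u, c) = s(u, a) := h
      rw [Sym2.eq_iff] at h'
      rcases h' with ⟨h1, h2⟩ | ⟨h1, h2⟩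
      · exact hac h2.symm
      · exact hune h1
    · intro h
      have h' : s(u, c) = s(u, b) := h
      rw [Sym2.eq_iff] at h'
      rcases h' with ⟨h1, h2⟩ | ⟨h1, h2⟩
      · exact hbc h2.symm
      · exact hub.ne h1
  have hPE1 : P E1 := by
    intro x hx
    have hadj2 : G'.Adj a a' := by rw [hG', deleteEdges_adj]; exact ⟨haa', he1S⟩
    rcases Sym2.mem_iff.mp hx with h | h
    · rw [h]; exact haA
    · rw [h]; exact hadj2.reachable
  have hPE2 : ¬ P E2 := by
    intro h
    exact huA (h u (by simp [hE2]))
  -- the first conjunct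
  have hmain : ¬ (G.lineGraph.induce T).Connected := by
    intro hconn
    obtain ⟨w⟩ := hconn.preconnected ⟨E1, hE1T⟩ ⟨E2, hE2T⟩
    exact hPE2 (winv _ _ w hPE1)
  refine ⟨hmain, ?_⟩
  -- second conjunct
  rintro ⟨-, h3⟩
  apply hmain
  have hseq : ({(⟨s(u,a), hua⟩ : G.edgeSet), ⟨s(u,b), hub⟩} : Set G.edgeSet)ᶜ = T := by
    ext f
    simp only [Set.mem_compl_iff, Set.mem_insert_iff, Set.mem_singleton_iff, hT,
      Set.mem_setOf_eq, not_or]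
    constructor
    · rintro ⟨h1, h2⟩
      exact ⟨fun h => h1 (Subtype.ext h), fun h => h2 (Subtype.ext h)⟩
    · rintro ⟨h1, h2⟩
      exact ⟨fun h => h1 (congrArg Subtype.val h), fun h => h2 (congrArg Subtype.val h)⟩
  have := h3 ({(⟨s(u,a), hua⟩ : G.edgeSet), ⟨s(u,b), hub⟩} : Set G.edgeSet)
    (le_trans (Set.ncard_insert_le _ _) (by simp))
  rwa [hseq] at this
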